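/- For all positive integers n, nonnegative integers m₁, ..., mₙ, and nonzero real x₁, ..., xₙ with x₁ + ⋯ + xₙ ≠ 0: 1/(x₁^(m₁+1) ⋯ xₙ^(mₙ+1)) = Σ_{t=1}^{n} Σ_{0 ≤ i_j ≤ m_j, j ≠ t} [((Σ_{j≠t} i_j) + m_t)! / (m_t! ∏_{j≠t} i_j!)] · 1/( (∏_{j≠t} x_j^(m_j - i_j + 1)) · (x₁ + ⋯ + xₙ)^((Σ_{j≠t} i_j) + m_t + 1) ). -/

import Mathlib

open Finset

namespace NVarAux

variable {n : ℕ}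

noncomputable def Rm (c : Fin n → ℕ) : ℝ :=
  ((∑ j, c j).factorial : ℝ) / ∏ j, ((c j).factorial : ℝ)

noncomputable def Cf (m : Fin n → ℕ) (t : Fin n) (i : Fin n → ℕ) : ℝ :=
  ((Nat.factorial ((∑ j ∈ Finset.univ.erase t, i j) + m t) : ℝ) /
    (Nat.factorial (m t) * ∏ j ∈ Finset.univ.erase t, (Nat.factorial (i j) : ℝ)))

def Pq (m : Fin n → ℕ) : Finset (Fin n → ℕ) := Fintype.piFinset fun j => range (m j + 1)

def Bq (m : Fin n → ℕ) (t : Fin n) : Finset (Fin n → ℕ) :=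
  Fintype.piFinset fun j => range (if j = t then 1 else m j + 1)

lemma mem_Pq {m c : Fin n → ℕ} : c ∈ Pq m ↔ ∀ j, c j ≤ m j := by
  simp [Pq, Fintype.mem_piFinset, Nat.lt_succ_iff]

lemma mem_Bq {m : Fin n → ℕ} {t : Fin n} {i : Fin n → ℕ} :
    i ∈ Bq m t ↔ i t = 0 ∧ ∀ j, j ≠ t → i j ≤ m j := by
  simp only [Bq, Fintype.mem_piFinset, mem_range]
  constructor
  · intro h
    refine ⟨?_, fun j hj => ?_⟩
    · have := h t; rw [if_pos rfl] at this; omega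
    · have := h j; rw [if_neg hj] at this; omega
  · rintro ⟨h0, h⟩ j
    by_cases hj : j = t
    · subst hj; rw [if_pos rfl]; omega
    · rw [if_neg hj]; exact Nat.lt_succ_of_le (h j hj)

lemma sum_update' (c : Fin n → ℕ) (k : Fin n) (a : ℕ) :
    ∑ j, Function.update c k a j = a + ∑ j ∈ univ.erase k, c j := by
  rw [Finset.sum_update_of_mem (mem_univ k), Finset.sdiff_singleton_eq_erase]

lemma sum_split (c : Fin n → ℕ) (k : Fin n) :
    c k + ∑ j ∈ univ.erase k, c j = ∑ j, c j := Finset.add_sum_erase _ _ (mem_univ k)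

lemma sum_erase_update (c : Fin n → ℕ) (k : Fin n) (a : ℕ) :
    ∑ j ∈ univ.erase k, Function.update c k a j = ∑ j ∈ univ.erase k, c j :=
  Finset.sum_congr rfl fun _ hj => Function.update_of_ne (Finset.ne_of_mem_erase hj) _ _

lemma prod_pow_update (x : Fin n → ℝ) (c : Fin n → ℕ) (k : Fin n) (a : ℕ) :
    ∏ j, x j ^ (Function.update c k a) j = x k ^ a * ∏ j ∈ univ.erase k, x j ^ c j := by
  rw [← Finset.mul_prod_erase univ _ (mem_univ k), Function.update_self]
  congr 1
  exact Finset.prod_congr rfl fun j hj => by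
    rw [Function.update_of_ne (Finset.ne_of_mem_erase hj)]

lemma prod_pow_split (x : Fin n → ℝ) (c : Fin n → ℕ) (k : Fin n) :
    ∏ j, x j ^ c j = x k ^ c k * ∏ j ∈ univ.erase k, x j ^ c j :=
  (Finset.mul_prod_erase univ _ (mem_univ k)).symm

lemma Rm_update (c : Fin n → ℕ) (k : Fin n) (hk : 1 ≤ c k) (r : ℕ) (hr : ∑ j, c j = r + 1) :
    Rm (Function.update c k (c k - 1)) = (c k : ℝ) / (r + 1) * Rm c := by
  have hmem : k ∈ (univ : Finset (Fin n)) := mem_univ k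
  have hsum : ∑ j, Function.update c k (c k - 1) j = r := by
    rw [sum_update']
    have := sum_split c k
    omega
  have hprod : (∏ j, (((Function.update c k (c k - 1)) j).factorial : ℝ))
      = ((c k - 1).factorial : ℝ) * ∏ j ∈ univ.erase k, ((c j).factorial : ℝ) := by
    rw [← Finset.mul_prod_erase univ _ hmem]
    congr 1
    · simp
    · exact Finset.prod_congr rfl fun j hj => by
        rw [Function.update_of_ne (Finset.ne_of_mem_erase hj)]
  have hck : (c k).factorial = c k * (c k - 1).factorial := by
    conv_lhs => rw [show c k = (c k - 1) + 1 by omega]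
    rw [Nat.factorial_succ]
    congr 2
    omega
  have hP : (∏ j, ((c j).factorial : ℝ))
      = ((c k).factorial : ℝ) * ∏ j ∈ univ.erase k, ((c j).factorial : ℝ) :=
    (Finset.mul_prod_erase univ _ hmem).symm
  have hPe : (∏ j ∈ univ.erase k, ((c j).factorial : ℝ)) ≠ 0 := by
    apply Finset.prod_ne_zero_iff.2
    intro j _
    exact_mod_cast (Nat.factorial_pos (c j)).ne'
  rw [Rm, Rm, hsum, hr, hprod, hP, Nat.factorial_succ, hck]
  have h1 : ((c k - 1).factorial : ℝ) ≠ 0 := by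
    exact_mod_cast (Nat.factorial_pos _).ne'
  have h2 : ((r : ℝ) + 1) ≠ 0 := by positivity
  have h3 : ((r).factorial : ℝ) ≠ 0 := by exact_mod_cast (Nat.factorial_pos _).ne'
  field_simp
  push_cast
  ring

lemma pascal (c : Fin n → ℕ) (r : ℕ) (hr : ∑ j, c j = r + 1) :
    ∑ k, (if 1 ≤ c k then Rm (Function.update c k (c k - 1)) else 0) = Rm c := by
  have h : ∀ k : Fin n, (if 1 ≤ c k then Rm (Function.update c k (c k - 1)) else 0)
      = (c k : ℝ) / (r + 1) * Rm c := by
    intro k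
    by_cases h : 1 ≤ c k
    · rw [if_pos h, Rm_update c k h r hr]
    · rw [if_neg h]
      have hk : c k = 0 := by omega
      rw [hk]
      simp
  rw [Finset.sum_congr rfl fun k _ => h k, ← Finset.sum_mul, ← Finset.sum_div]
  rw [show (∑ j, ((c j : ℝ))) = ((∑ j, c j : ℕ) : ℝ) by push_cast; ring, hr]
  push_cast
  field_simp


lemma Qmul (m : Fin n → ℕ) (x : Fin n → ℝ) (r : ℕ) :
    (∑ c ∈ (Pq m).filter (fun c => ∑ j, c j = r), Rm c * ∏ j, x j ^ c j) * (∑ j, x j)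
      = (∑ k, ∑ c ∈ ((Pq m).filter (fun c => ∑ j, c j = r)).filter (fun c => c k < m k),
          Rm c * (∏ j, x j ^ c j) * x k)
        + ∑ k, ∑ c ∈ ((Pq m).filter (fun c => ∑ j, c j = r)).filter (fun c => ¬ c k < m k),
          Rm c * (∏ j, x j ^ c j) * x k := by
  rw [Finset.sum_mul]
  have h1 : ∀ c ∈ (Pq m).filter (fun c => ∑ j, c j = r),
      (Rm c * ∏ j, x j ^ c j) * (∑ j, x j) = ∑ k, Rm c * (∏ j, x j ^ c j) * x k := by
    intro c _
    rw [Finset.mul_sum]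
  rw [Finset.sum_congr rfl h1, Finset.sum_comm, ← Finset.sum_add_distrib]
  exact Finset.sum_congr rfl fun k _ => (Finset.sum_filter_add_sum_filter_not _ _ _).symm

lemma Qsucc (m : Fin n → ℕ) (x : Fin n → ℝ) (r : ℕ) :
    ∑ c ∈ (Pq m).filter (fun c => ∑ j, c j = r + 1), Rm c * ∏ j, x j ^ c j
      = ∑ k, ∑ c ∈ ((Pq m).filter (fun c => ∑ j, c j = r + 1)).filter (fun c => 1 ≤ c k),
          Rm (Function.update c k (c k - 1)) * ∏ j, x j ^ c j := by
  have h1 : ∀ c ∈ (Pq m).filter (fun c => ∑ j, c j = r + 1),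
      Rm c * ∏ j, x j ^ c j
        = ∑ k, (if 1 ≤ c k then Rm (Function.update c k (c k - 1)) * ∏ j, x j ^ c j else 0) := by
    intro c hc
    rw [mem_filter] at hc
    rw [← pascal c r hc.2, Finset.sum_mul]
    exact Finset.sum_congr rfl fun k _ => by rw [ite_mul, zero_mul]
  rw [Finset.sum_congr rfl h1, Finset.sum_comm]
  exact Finset.sum_congr rfl fun k _ => (Finset.sum_filter _ _).symm


lemma stay (m : Fin n → ℕ) (x : Fin n → ℝ) (k : Fin n) (r : ℕ) :
    ∑ c ∈ ((Pq m).filter (fun c => ∑ j, c j = r)).filter (fun c => c k < m k),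
        Rm c * (∏ j, x j ^ c j) * x k
      = ∑ c ∈ ((Pq m).filter (fun c => ∑ j, c j = r + 1)).filter (fun c => 1 ≤ c k),
          Rm (Function.update c k (c k - 1)) * ∏ j, x j ^ c j := by
  apply Finset.sum_nbij' (fun c => Function.update c k (c k + 1))
      (fun c => Function.update c k (c k - 1))
  · intro c hc
    simp only [mem_filter, mem_Pq] at hc ⊢
    obtain ⟨⟨hP, hsum⟩, hk⟩ := hc
    have hsp := sum_split c k
    refine ⟨⟨fun j => ?_, ?_⟩, ?_⟩
    · by_cases hj : j = k
      · subst hj; rw [Function.update_self]; omega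
      · rw [Function.update_of_ne hj]; exact hP j
    · rw [sum_update']; omega
    · rw [Function.update_self]; omega
  · intro c hc
    simp only [mem_filter, mem_Pq] at hc ⊢
    obtain ⟨⟨hP, hsum⟩, hk⟩ := hc
    have hsp := sum_split c k
    have hPk := hP k
    refine ⟨⟨fun j => ?_, ?_⟩, ?_⟩
    · by_cases hj : j = k
      · subst hj; rw [Function.update_self]; omega
      · rw [Function.update_of_ne hj]; exact hP j
    · rw [sum_update']; omega
    · rw [Function.update_self]; omega
  · intro c _
    rw [Function.update_idem, Function.update_self, Nat.add_sub_cancel,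
      Function.update_eq_self]
  · intro c hc
    simp only [mem_filter] at hc
    rw [Function.update_idem, Function.update_self, Nat.sub_add_cancel hc.2,
      Function.update_eq_self]
  · intro c hc
    simp only [mem_filter] at hc
    rw [Function.update_idem, Function.update_self, Nat.add_sub_cancel,
      Function.update_eq_self, prod_pow_update, prod_pow_split x c k, pow_succ]
    ring


lemma overk (m : Fin n → ℕ) (x : Fin n → ℝ) (k : Fin n) (r : ℕ) :
    ∑ c ∈ ((Pq m).filter (fun c => ∑ j, c j = r)).filter (fun c => ¬ c k < m k),
        Rm c * (∏ j, x j ^ c j) * x k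
      = ∑ i ∈ (Bq m k).filter (fun i => (∑ j ∈ univ.erase k, i j) + m k + 1 = r + 1),
          Cf m k i * (x k ^ (m k + 1) * ∏ j ∈ univ.erase k, x j ^ i j) *
            (∑ j, x j) ^ (r + 1 - ((∑ j ∈ univ.erase k, i j) + m k + 1)) := by
  apply Finset.sum_nbij' (fun c => Function.update c k 0)
      (fun i => Function.update i k (m k))
  · intro c hc
    simp only [mem_filter, mem_Pq, mem_Bq] at hc ⊢
    obtain ⟨⟨hP, hsum⟩, hk⟩ := hc
    have hsp := sum_split c k
    have hPk := hP k
    refine ⟨⟨Function.update_self _ _ _, fun j hj => ?_⟩, ?_⟩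
    · rw [Function.update_of_ne hj]; exact hP j
    · rw [sum_erase_update]; omega
  · intro i hi
    simp only [mem_filter, mem_Pq, mem_Bq] at hi ⊢
    obtain ⟨⟨h0, hB⟩, hsum⟩ := hi
    have hsp := sum_split (Function.update i k (m k)) k
    rw [Function.update_self, sum_erase_update] at hsp
    refine ⟨⟨fun j => ?_, ?_⟩, ?_⟩
    · by_cases hj : j = k
      · subst hj; rw [Function.update_self]
      · rw [Function.update_of_ne hj]; exact hB j hj
    · omega
    · rw [Function.update_self]; omega
  · intro c hc
    simp only [mem_filter, mem_Pq] at hc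
    have hPk := hc.1.1 k
    have : c k = m k := by omega
    rw [Function.update_idem, ← this, Function.update_eq_self]
  · intro i hi
    simp only [mem_filter, mem_Bq] at hi
    rw [Function.update_idem, ← hi.1.1, Function.update_eq_self]
  · intro c hc
    simp only [mem_filter, mem_Pq] at hc
    obtain ⟨⟨hP, hsum⟩, hk⟩ := hc
    have hPk := hP k
    have hck : c k = m k := by omega
    have hsp := sum_split c k
    have hse : ∑ j ∈ univ.erase k, Function.update c k 0 j = ∑ j ∈ univ.erase k, c j :=
      sum_erase_update c k 0
    have hexp : r + 1 - ((∑ j ∈ univ.erase k, Function.update c k 0 j) + m k + 1) = 0 := by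
      omega
    rw [hexp, pow_zero, mul_one]
    have hCf : Cf m k (Function.update c k 0) = Rm c := by
      rw [Cf, Rm, hse, hsum]
      have hnum : (∑ j ∈ univ.erase k, c j) + m k = r := by omega
      rw [hnum]
      congr 1
      rw [← Finset.mul_prod_erase univ _ (mem_univ k), hck]
      congr 1
      exact Finset.prod_congr rfl fun j hj => by
        rw [Function.update_of_ne (Finset.ne_of_mem_erase hj)]
    have hprod : ∏ j ∈ univ.erase k, x j ^ (Function.update c k 0) j
        = ∏ j ∈ univ.erase k, x j ^ c j :=
      Finset.prod_congr rfl fun j hj => by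
        rw [Function.update_of_ne (Finset.ne_of_mem_erase hj)]
    rw [hCf, hprod, prod_pow_split x c k, hck, pow_succ]
    ring


lemma key (m : Fin n → ℕ) (x : Fin n → ℝ) (r : ℕ) :
    (∑ j, x j) ^ r
      = (∑ c ∈ (Pq m).filter (fun c => ∑ j, c j = r), Rm c * ∏ j, x j ^ c j)
        + ∑ t, ∑ i ∈ (Bq m t).filter
              (fun i => (∑ j ∈ univ.erase t, i j) + m t + 1 ≤ r),
            Cf m t i * (x t ^ (m t + 1) * ∏ j ∈ univ.erase t, x j ^ i j) *
              (∑ j, x j) ^ (r - ((∑ j ∈ univ.erase t, i j) + m t + 1)) := by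
  induction r with
  | zero =>
    have h1 : (Pq m).filter (fun c => ∑ j, c j = 0) = {fun _ => 0} := by
      ext c
      simp only [mem_filter, mem_singleton, mem_Pq, Finset.sum_eq_zero_iff, mem_univ,
        true_implies, funext_iff]
      constructor
      · rintro ⟨-, h⟩; exact h
      · intro h; exact ⟨fun j => by rw [h j]; omega, h⟩
    have h2 : ∀ t : Fin n, (Bq m t).filter
        (fun i => (∑ j ∈ univ.erase t, i j) + m t + 1 ≤ 0) = ∅ := by
      intro t
      apply Finset.filter_false_of_mem
      intro i _
      omega
    rw [h1]
    simp [Rm, h2]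
  | succ r ih =>
    rw [pow_succ, ih, add_mul, Qmul]
    have hO : (∑ t, ∑ i ∈ (Bq m t).filter
          (fun i => (∑ j ∈ univ.erase t, i j) + m t + 1 ≤ r),
          Cf m t i * (x t ^ (m t + 1) * ∏ j ∈ univ.erase t, x j ^ i j) *
            (∑ j, x j) ^ (r - ((∑ j ∈ univ.erase t, i j) + m t + 1))) * (∑ j, x j)
        = ∑ t, ∑ i ∈ (Bq m t).filter
            (fun i => (∑ j ∈ univ.erase t, i j) + m t + 1 ≤ r),
            Cf m t i * (x t ^ (m t + 1) * ∏ j ∈ univ.erase t, x j ^ i j) *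
              (∑ j, x j) ^ (r + 1 - ((∑ j ∈ univ.erase t, i j) + m t + 1)) := by
      rw [Finset.sum_mul]
      refine Finset.sum_congr rfl fun t _ => ?_
      rw [Finset.sum_mul]
      refine Finset.sum_congr rfl fun i hi => ?_
      rw [mem_filter] at hi
      rw [mul_assoc, ← pow_succ]
      congr 2
      omega
    have hsplitO : ∀ t : Fin n,
        (∑ i ∈ (Bq m t).filter (fun i => (∑ j ∈ univ.erase t, i j) + m t + 1 ≤ r + 1),
          Cf m t i * (x t ^ (m t + 1) * ∏ j ∈ univ.erase t, x j ^ i j) *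
            (∑ j, x j) ^ (r + 1 - ((∑ j ∈ univ.erase t, i j) + m t + 1)))
        = (∑ i ∈ (Bq m t).filter (fun i => (∑ j ∈ univ.erase t, i j) + m t + 1 ≤ r),
            Cf m t i * (x t ^ (m t + 1) * ∏ j ∈ univ.erase t, x j ^ i j) *
              (∑ j, x j) ^ (r + 1 - ((∑ j ∈ univ.erase t, i j) + m t + 1)))
          + ∑ i ∈ (Bq m t).filter (fun i => (∑ j ∈ univ.erase t, i j) + m t + 1 = r + 1),
              Cf m t i * (x t ^ (m t + 1) * ∏ j ∈ univ.erase t, x j ^ i j) *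
                (∑ j, x j) ^ (r + 1 - ((∑ j ∈ univ.erase t, i j) + m t + 1)) := by
      intro t
      rw [← Finset.sum_filter_add_sum_filter_not
        ((Bq m t).filter (fun i => (∑ j ∈ univ.erase t, i j) + m t + 1 ≤ r + 1))
        (fun i => (∑ j ∈ univ.erase t, i j) + m t + 1 ≤ r)]
      congr 1
      · apply Finset.sum_congr _ fun _ _ => rfl
        rw [Finset.filter_filter]
        exact Finset.filter_congr fun i _ => by constructor <;> intro h <;> omega
      · apply Finset.sum_congr _ fun _ _ => rfl
        rw [Finset.filter_filter]
        exact Finset.filter_congr fun i _ => by constructor <;> intro h <;> omega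
    rw [hO, Qsucc m x r]
    have hover : (∑ k, ∑ c ∈ ((Pq m).filter (fun c => ∑ j, c j = r)).filter
          (fun c => ¬ c k < m k), Rm c * (∏ j, x j ^ c j) * x k)
        = ∑ t, ∑ i ∈ (Bq m t).filter
            (fun i => (∑ j ∈ univ.erase t, i j) + m t + 1 = r + 1),
            Cf m t i * (x t ^ (m t + 1) * ∏ j ∈ univ.erase t, x j ^ i j) *
              (∑ j, x j) ^ (r + 1 - ((∑ j ∈ univ.erase t, i j) + m t + 1)) :=
      Finset.sum_congr rfl fun k _ => overk m x k r
    have hstay : (∑ k, ∑ c ∈ ((Pq m).filter (fun c => ∑ j, c j = r)).filter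
          (fun c => c k < m k), Rm c * (∏ j, x j ^ c j) * x k)
        = ∑ k, ∑ c ∈ ((Pq m).filter (fun c => ∑ j, c j = r + 1)).filter (fun c => 1 ≤ c k),
            Rm (Function.update c k (c k - 1)) * ∏ j, x j ^ c j :=
      Finset.sum_congr rfl fun k _ => stay m x k r
    rw [hover, hstay, Finset.sum_congr rfl fun t (_ : t ∈ univ) => hsplitO t,
      Finset.sum_add_distrib]
    ring


lemma key' (m : Fin n → ℕ) (x : Fin n → ℝ) :
    (∑ j, x j) ^ ((∑ j, m j) + 1)
      = ∑ t, ∑ i ∈ Bq m t,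
          Cf m t i * (x t ^ (m t + 1) * ∏ j ∈ univ.erase t, x j ^ i j) *
            (∑ j, x j) ^ ((∑ j, m j) + 1 - ((∑ j ∈ univ.erase t, i j) + m t + 1)) := by
  rw [key m x ((∑ j, m j) + 1)]
  have hQ : (Pq m).filter (fun c => ∑ j, c j = (∑ j, m j) + 1) = ∅ := by
    apply Finset.filter_false_of_mem
    intro c hc
    have : ∑ j, c j ≤ ∑ j, m j :=
      Finset.sum_le_sum fun j _ => mem_Pq.1 hc j
    omega
  have hB : ∀ t : Fin n, (Bq m t).filter
      (fun i => (∑ j ∈ univ.erase t, i j) + m t + 1 ≤ (∑ j, m j) + 1) = Bq m t := by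
    intro t
    apply Finset.filter_true_of_mem
    intro i hi
    have h1 : ∑ j ∈ univ.erase t, i j ≤ ∑ j ∈ univ.erase t, m j :=
      Finset.sum_le_sum fun j hj => (mem_Bq.1 hi).2 j (Finset.ne_of_mem_erase hj)
    have h2 := sum_split m t
    omega
  rw [hQ]
  simp only [Finset.sum_empty, zero_add]
  exact Finset.sum_congr rfl fun t _ => by rw [hB t]

end NVarAux

theorem n_var_inverse_identity (n : ℕ) (hn : 0 < n) (m : Fin n → ℕ) (x : Fin n → ℝ)
    (hx : ∀ t, x t ≠ 0) (hs : (∑ j, x j) ≠ 0) :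
    1 / (∏ j, x j ^ (m j + 1))
      = ∑ t, ∑ i ∈ Fintype.piFinset (fun j => Finset.range (if j = t then 1 else m j + 1)),
          ((Nat.factorial ((∑ j ∈ Finset.univ.erase t, i j) + m t) : ℝ) /
            (Nat.factorial (m t) * ∏ j ∈ Finset.univ.erase t, Nat.factorial (i j))) *
          (1 / ((∏ j ∈ Finset.univ.erase t, x j ^ (m j - i j + 1)) *
            (∑ j, x j) ^ ((∑ j ∈ Finset.univ.erase t, i j) + m t + 1))) := by
  classical
  open NVarAux in
  have hD : (∏ j, x j ^ (m j + 1)) ≠ 0 :=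
    Finset.prod_ne_zero_iff.2 fun j _ => pow_ne_zero _ (hx j)
  have hsM : (∑ j, x j) ^ ((∑ j, m j) + 1) ≠ 0 := pow_ne_zero _ hs
  have hkey := NVarAux.key' m x
  calc 1 / (∏ j, x j ^ (m j + 1))
      = (∑ j, x j) ^ ((∑ j, m j) + 1) /
          ((∏ j, x j ^ (m j + 1)) * (∑ j, x j) ^ ((∑ j, m j) + 1)) := by
        rw [div_eq_div_iff hD (by exact mul_ne_zero hD hsM)]
        ring
    _ = ∑ t, ∑ i ∈ NVarAux.Bq m t,
          NVarAux.Cf m t i * (x t ^ (m t + 1) * ∏ j ∈ Finset.univ.erase t, x j ^ i j) *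
            (∑ j, x j) ^ ((∑ j, m j) + 1 - ((∑ j ∈ Finset.univ.erase t, i j) + m t + 1)) /
          ((∏ j, x j ^ (m j + 1)) * (∑ j, x j) ^ ((∑ j, m j) + 1)) := by
        rw [hkey, Finset.sum_div]
        exact Finset.sum_congr rfl fun t _ => (Finset.sum_div _ _ _)
    _ = _ := by
        refine Finset.sum_congr rfl fun t _ => Finset.sum_congr rfl fun i hi => ?_
        have hiB := NVarAux.mem_Bq.1 hi
        have hI : ∑ j ∈ Finset.univ.erase t, i j ≤ ∑ j ∈ Finset.univ.erase t, m j :=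
          Finset.sum_le_sum fun j hj => hiB.2 j (Finset.ne_of_mem_erase hj)
        have hM := NVarAux.sum_split m t
        -- product split
        have hxsplit : (∏ j, x j ^ (m j + 1))
            = (x t ^ (m t + 1) * ∏ j ∈ Finset.univ.erase t, x j ^ i j) *
              ∏ j ∈ Finset.univ.erase t, x j ^ (m j - i j + 1) := by
          rw [← Finset.mul_prod_erase Finset.univ (fun j => x j ^ (m j + 1)) (Finset.mem_univ t),
            mul_assoc, ← Finset.prod_mul_distrib]
          congr 1
          refine Finset.prod_congr rfl fun j hj => ?_
          rw [← pow_add]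
          congr 1
          have := hiB.2 j (Finset.ne_of_mem_erase hj)
          omega
        have hssplit : (∑ j, x j) ^ ((∑ j, m j) + 1)
            = (∑ j, x j) ^ ((∑ j, m j) + 1 - ((∑ j ∈ Finset.univ.erase t, i j) + m t + 1)) *
              (∑ j, x j) ^ ((∑ j ∈ Finset.univ.erase t, i j) + m t + 1) := by
          rw [← pow_add]
          congr 1
          omega
        have hA : (∏ j ∈ Finset.univ.erase t, x j ^ (m j - i j + 1)) ≠ 0 :=
          Finset.prod_ne_zero_iff.2 fun j _ => pow_ne_zero _ (hx j)
        have hX : (x t ^ (m t + 1) * ∏ j ∈ Finset.univ.erase t, x j ^ i j) ≠ 0 :=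
          mul_ne_zero (pow_ne_zero _ (hx t))
            (Finset.prod_ne_zero_iff.2 fun j _ => pow_ne_zero _ (hx j))
        have hSB : (∑ j, x j) ^ ((∑ j ∈ Finset.univ.erase t, i j) + m t + 1) ≠ 0 :=
          pow_ne_zero _ hs
        have hSE : (∑ j, x j) ^
            ((∑ j, m j) + 1 - ((∑ j ∈ Finset.univ.erase t, i j) + m t + 1)) ≠ 0 :=
          pow_ne_zero _ hs
        rw [NVarAux.Cf, hxsplit, hssplit]
        field_simp
        have hP' : (∏ j ∈ Finset.univ.erase t, x j ^ i j) ≠ 0 :=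
          Finset.prod_ne_zero_iff.2 fun j _ => pow_ne_zero _ (hx j)
        have hxt := hx t
        have e : (x t * x t ^ m t * ∏ j ∈ Finset.univ.erase t, x j ^ i j) * (x t)⁻¹ *
            (x t)⁻¹ ^ m t * (∏ j ∈ Finset.univ.erase t, x j ^ i j)⁻¹ = 1 := by
          rw [inv_pow]
          field_simp
        push_cast at e ⊢
        linear_combination (∏ j ∈ Finset.univ.erase t, ((i j).factorial : ℝ)) * e
  done
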